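/- Let T be a rank-4 lattice with basis ε₁, ε₂, ε₃, ε₄ and consider the sixteen weights (±ε₁±ε₂±ε₃±ε₄)/2 (in the lattice generated by the εᵢ and their half-sums). The semigroup of nonnegative integer relations among these weights is not free: its minimal generating set contains the eight relations pairing each weight with its negative, together with the relation X_{(ε₁+ε₂+ε₃−ε₄)/2}X_{(ε₁+ε₂−ε₃+ε₄)/2}X_{(−ε₁−ε₂+ε₃+ε₄)/2}X_{(−ε₁−ε₂−ε₃−ε₄)/2}, exceeding the rank 16 − 4 = 12 of the relation lattice. -/

import Mathlib

/-- The semigroup of nonnegative integer relations among a list of weights. -/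
def relSemigroup {M : Type*} [AddCommGroup M] {n : ℕ} (w : Fin n → M) :
    AddSubmonoid (Fin n → ℕ) where
  carrier := {a | ∑ i, (a i : ℤ) • w i = 0}
  add_mem' := by
    intro a b ha hb
    simp only [Set.mem_setOf_eq] at *
    have : ∀ i ∈ Finset.univ, (((a + b) i : ℕ) : ℤ) • w i
        = (a i : ℤ) • w i + (b i : ℤ) • w i := by
      intro i _
      have : (((a + b) i : ℕ) : ℤ) = (a i : ℤ) + (b i : ℤ) := by simp [Pi.add_apply]
      rw [this, add_smul]
    rw [Finset.sum_congr rfl this, Finset.sum_add_distrib, ha, hb, add_zero]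
  zero_mem' := by simp

def IsFreeRelMonoid {n : ℕ} (A : AddSubmonoid (Fin n → ℕ)) : Prop :=
  ∃ r : ℕ, Nonempty (A ≃+ (Fin r → ℕ))

def IsIrreducibleIn {n : ℕ} (A : AddSubmonoid (Fin n → ℕ)) (a : Fin n → ℕ) : Prop :=
  a ∈ A ∧ a ≠ 0 ∧ ∀ b c : Fin n → ℕ, b ∈ A → c ∈ A → b + c = a → b = 0 ∨ c = 0

/-! ### Auxiliary machinery -/

lemma mem_relSemigroup {M : Type*} [AddCommGroup M] {n : ℕ} (w : Fin n → M) (a : Fin n → ℕ) :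
    a ∈ relSemigroup w ↔ ∑ i, (a i : ℤ) • w i = 0 := Iff.rfl

instance relDec {M : Type*} [AddCommGroup M] [DecidableEq M] {n : ℕ} (w : Fin n → M) :
    DecidablePred (· ∈ relSemigroup w) :=
  fun a => decidable_of_iff _ (mem_relSemigroup w a).symm

lemma irred_iff {n : ℕ} (A : AddSubmonoid (Fin n → ℕ)) (a : Fin n → ℕ) :
    IsIrreducibleIn A a ↔ a ∈ A ∧ a ≠ 0 ∧
      ∀ b ∈ Finset.Iic a, b ∈ A → (a - b) ∈ A → b = 0 ∨ a - b = 0 := by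
  constructor
  · rintro ⟨h1, h2, h3⟩
    refine ⟨h1, h2, fun b hb hbA hcA => h3 b (a - b) hbA hcA ?_⟩
    funext j
    have h := Finset.mem_Iic.mp hb
    rw [Pi.le_def] at h
    have := h j
    simp only [Pi.add_apply, Pi.sub_apply]
    omega
  · rintro ⟨h1, h2, h3⟩
    refine ⟨h1, h2, fun b c hbA hcA hbc => ?_⟩
    have hble : b ≤ a := by
      rw [Pi.le_def]
      intro j
      have := congrFun hbc j
      simp only [Pi.add_apply] at this
      omega
    have hc : c = a - b := by
      funext j
      have := congrFun hbc j
      simp only [Pi.add_apply] at this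
      simp only [Pi.sub_apply]
      omega
    subst hc
    exact h3 b (Finset.mem_Iic.mpr hble) hbA hcA

/-- The sixteen sign vectors. -/
def W : Fin 16 → Fin 4 → ℤ := fun i j => if Nat.testBit i.val j.val then -1 else 1

def qq : Fin 16 → ℕ := Pi.single 8 1 + Pi.single 4 1 + Pi.single 3 1 + Pi.single 15 1

def qq' : Fin 16 → ℕ := Pi.single 7 1 + Pi.single 11 1 + Pi.single 12 1 + Pi.single 0 1

lemma fin8_lt (i : Fin 8) : i.val < 16 := by omega

lemma fin8_lt' (i : Fin 8) : 15 - i.val < 16 := by omega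

def pp : Fin 8 → (Fin 16 → ℕ) :=
  fun i => Pi.single ⟨i.val, fin8_lt i⟩ 1 + Pi.single ⟨15 - i.val, fin8_lt' i⟩ 1

lemma qq_irred : IsIrreducibleIn (relSemigroup W) qq := by rw [irred_iff]; decide

lemma qq'_irred : IsIrreducibleIn (relSemigroup W) qq' := by rw [irred_iff]; decide

lemma pp_irred : ∀ i : Fin 8, IsIrreducibleIn (relSemigroup W) (pp i) := by
  simp only [irred_iff]; decide

lemma card_nine : (insert qq (Finset.image pp Finset.univ)).card = 9 := by decide

/-- In the free monoid `Fin r → ℕ`, an irreducible element has coordinate sum `1`. -/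
lemma free_irred_sum {r : ℕ} (x : Fin r → ℕ) (hx : x ≠ 0)
    (h : ∀ b c : Fin r → ℕ, b + c = x → b = 0 ∨ c = 0) : ∑ i, x i = 1 := by
  obtain ⟨j, hj⟩ : ∃ j, x j ≠ 0 := by
    by_contra h'
    push_neg at h'
    exact hx (funext h')
  have hsplit : Pi.single j 1 + (x - Pi.single j 1) = x := by
    funext k
    by_cases hk : k = j
    · subst hk
      simp only [Pi.add_apply, Pi.sub_apply, Pi.single_eq_same]
      omega
    · simp [Pi.single_apply, hk]
  rcases h _ _ hsplit with h0 | h0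
  · exact absurd (congrFun h0 j) (by simp)
  · have hx1 : x = Pi.single j 1 := by
      funext k
      have h1 := congrFun h0 k
      have h2 := congrFun hsplit k
      simp only [Pi.sub_apply, Pi.zero_apply] at h1
      simp only [Pi.add_apply, Pi.sub_apply] at h2
      omega
    rw [hx1]
    simp [Pi.single_apply]

set_option synthInstance.maxHeartbeats 1000000 in
lemma length_one {n r : ℕ} {A : AddSubmonoid (Fin n → ℕ)} (φ : A ≃+ (Fin r → ℕ))
    {a : Fin n → ℕ} (ha : IsIrreducibleIn A a) (haA : a ∈ A) :
    ∑ i, φ ⟨a, haA⟩ i = 1 := by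
  apply free_irred_sum
  · intro h0
    have h1 : (⟨a, haA⟩ : A) = 0 := by
      apply φ.injective
      rw [h0, φ.map_zero]
    exact ha.2.1 (congrArg Subtype.val h1)
  · intro b c hbc
    have hsum : ((φ.symm b : A) : Fin n → ℕ) + ((φ.symm c : A) : Fin n → ℕ) = a := by
      have h2 : φ.symm b + φ.symm c = (⟨a, haA⟩ : A) := by
        rw [← map_add, hbc]
        exact φ.symm_apply_apply _
      exact congrArg Subtype.val h2
    rcases ha.2.2 _ _ (φ.symm b).2 (φ.symm c).2 hsum with h | h
    · left
      have h3 : φ.symm b = 0 := Subtype.ext h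
      rw [← φ.apply_symm_apply b, h3, φ.map_zero]
    · right
      have h3 : φ.symm c = 0 := Subtype.ext h
      rw [← φ.apply_symm_apply c, h3, φ.map_zero]

set_option synthInstance.maxHeartbeats 1000000 in
lemma not_free : ¬ IsFreeRelMonoid (relSemigroup W) := by
  rintro ⟨r, ⟨φ⟩⟩
  have hq : qq ∈ relSemigroup W := qq_irred.1
  have hq' : qq' ∈ relSemigroup W := qq'_irred.1
  have hp : ∀ i, pp i ∈ relSemigroup W := fun i => (pp_irred i).1
  have key : (⟨qq, hq⟩ : relSemigroup W) + ⟨qq', hq'⟩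
      = ⟨pp 0, hp 0⟩ + ⟨pp 3, hp 3⟩ + ⟨pp 4, hp 4⟩ + ⟨pp 7, hp 7⟩ := by
    apply Subtype.ext
    show qq + qq' = pp 0 + pp 3 + pp 4 + pp 7
    decide
  have happ := congrArg (fun x : relSemigroup W => ∑ i, φ x i) key
  simp only [map_add, Pi.add_apply, Finset.sum_add_distrib] at happ
  rw [length_one φ qq_irred hq, length_one φ qq'_irred hq',
      length_one φ (pp_irred 0) (hp 0), length_one φ (pp_irred 3) (hp 3),
      length_one φ (pp_irred 4) (hp 4), length_one φ (pp_irred 7) (hp 7)] at happ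
  omega

lemma main_stmt :
    (∀ i : Fin 8, IsIrreducibleIn (relSemigroup W) (pp i)) ∧
    IsIrreducibleIn (relSemigroup W) qq ∧
    (insert qq (Finset.image pp Finset.univ)).card = 9 ∧
    ¬ IsFreeRelMonoid (relSemigroup W) :=
  ⟨pp_irred, qq_irred, card_nine, not_free⟩

/-- for the sixteen weights `(±ε₁±ε₂±ε₃±ε₄)/2` in the lattice generated by
the `εᵢ` and their half-sums (here represented by the doubled weights, the sixteen sign
vectors, which has the same relation semigroup), the relation semigroup is not free: its
minimal generating set contains the eight relations pairing each weight with its negative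
together with the quadruple relation
`X_{(ε₁+ε₂+ε₃−ε₄)/2} X_{(ε₁+ε₂−ε₃+ε₄)/2} X_{(−ε₁−ε₂+ε₃+ε₄)/2} X_{(−ε₁−ε₂−ε₃−ε₄)/2}`,
exceeding the rank `16 − 4 = 12` of the relation lattice. -/
theorem stmt19 :
    -- weight with index i has j-th coordinate −1 exactly when bit j of i is set
    let w : Fin 16 → (Fin 4 → ℤ) := fun i j => if Nat.testBit i.val j.val then -1 else 1
    let A := relSemigroup w
    let u : Fin 16 → (Fin 16 → ℕ) := fun i => Pi.single i 1
    -- the eight relations pairing each weight with its negative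
    let p : Fin 8 → (Fin 16 → ℕ) := fun i => u ⟨i.val, by omega⟩ + u ⟨15 - i.val, by omega⟩
    -- X_{(ε₁+ε₂+ε₃−ε₄)/2} X_{(ε₁+ε₂−ε₃+ε₄)/2} X_{(−ε₁−ε₂+ε₃+ε₄)/2} X_{(−ε₁−ε₂−ε₃−ε₄)/2}
    let q : Fin 16 → ℕ := u 8 + u 4 + u 3 + u 15
    (∀ i : Fin 8, IsIrreducibleIn A (p i)) ∧
    IsIrreducibleIn A q ∧
    (insert q (Finset.image p Finset.univ)).card = 9 ∧
    ¬ IsFreeRelMonoid A := by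
  exact main_stmt
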